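/- Let a¹², a²¹, a²² be real numbers with a²² < 0, a¹²a²¹ < 0, and 4a¹²a²¹ + (a²²)² > 0. Then the two values r_± := ( 2a¹²a²¹ + a²²( a²² ± √(4a¹²a²¹ + (a²²)²) ) ) / ( 2(a²¹)² ) are both strictly positive, and the single-step sensory capacity attains its maximal value one there: C̄_Y(r_+) = C̄_Y(r_−) = 1, where C̄_Y(r) = 4(a²²)² r (a²¹ r − a¹²)² / ( (a¹²)² − 2a¹²a²¹ r + r((a²²)² + (a²¹)² r) )²; moreover C̄_Y(r) ≤ 1 for all r > 0. (Optimal s-SC in the first parameter case of Sec. IV.) -/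

import Mathlib

/-- Steady-state single-step sensory capacity `C̄_Y` for the bipartite linear Langevin system
with `a¹¹ = 0`, as a function of the noise-intensity ratio `r = T^X / T^Y` (Eq. (A6)). -/
noncomputable def sCapY0 (a12 a21 a22 r : ℝ) : ℝ :=
  4 * a22 ^ 2 * r * (a21 * r - a12) ^ 2 /
    (a12 ^ 2 - 2 * a12 * a21 * r + r * (a22 ^ 2 + a21 ^ 2 * r)) ^ 2

lemma sCapY0_eq_one_of_key (a12 a21 a22 r : ℝ) (h22 : a22 ≠ 0) (hr : 0 < r)
    (hkey : (a21 * r - a12) ^ 2 = a22 ^ 2 * r) : sCapY0 a12 a21 a22 r = 1 := by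
  have hD : a12 ^ 2 - 2 * a12 * a21 * r + r * (a22 ^ 2 + a21 ^ 2 * r) = 2 * (a22 ^ 2 * r) := by
    linear_combination hkey
  rw [sCapY0, hkey, hD]
  have : a22 ^ 2 * r ≠ 0 := by positivity
  field_simp
  ring

/-- Optimal single-step sensory capacity in the first parameter case of Sec. IV: if
`4a¹²a²¹ + (a²²)² > 0` (together with the stability conditions with `a¹¹ = 0`), then the two
noise-intensity ratios `r_± = (2a¹²a²¹ + a²²(a²² ± √(4a¹²a²¹ + (a²²)²)))/(2(a²¹)²)` are both
strictly positive, `C̄_Y(r_+) = C̄_Y(r_−) = 1`, and `C̄_Y(r) ≤ 1` for all `r > 0`. -/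
theorem sCapY0_optimal_case_one (a12 a21 a22 : ℝ) (h22 : a22 < 0) (h1221 : a12 * a21 < 0)
    (hdisc : 4 * a12 * a21 + a22 ^ 2 > 0) :
    (0 < (2 * a12 * a21 + a22 * (a22 + Real.sqrt (4 * a12 * a21 + a22 ^ 2))) /
        (2 * a21 ^ 2)) ∧
    (0 < (2 * a12 * a21 + a22 * (a22 - Real.sqrt (4 * a12 * a21 + a22 ^ 2))) /
        (2 * a21 ^ 2)) ∧
    sCapY0 a12 a21 a22
        ((2 * a12 * a21 + a22 * (a22 + Real.sqrt (4 * a12 * a21 + a22 ^ 2))) /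
          (2 * a21 ^ 2)) = 1 ∧
    sCapY0 a12 a21 a22
        ((2 * a12 * a21 + a22 * (a22 - Real.sqrt (4 * a12 * a21 + a22 ^ 2))) /
          (2 * a21 ^ 2)) = 1 ∧
    ∀ r : ℝ, 0 < r → sCapY0 a12 a21 a22 r ≤ 1 := by
  have h21 : a21 ≠ 0 := by
    rintro rfl; simp at h1221
  have h21sq : (0:ℝ) < a21 ^ 2 := by positivity
  have h22' : a22 ≠ 0 := ne_of_lt h22
  set s := Real.sqrt (4 * a12 * a21 + a22 ^ 2) with hs
  have hs0 : 0 ≤ s := Real.sqrt_nonneg _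
  have hs2 : s ^ 2 = 4 * a12 * a21 + a22 ^ 2 := Real.sq_sqrt hdisc.le
  have hn2 : 0 < 2 * a12 * a21 + a22 * (a22 - s) := by nlinarith
  have hn1 : 0 < 2 * a12 * a21 + a22 * (a22 + s) := by nlinarith [sq_nonneg (a12 * a21)]
  have hr1 : 0 < (2 * a12 * a21 + a22 * (a22 + s)) / (2 * a21 ^ 2) :=
    div_pos hn1 (by positivity)
  have hr2 : 0 < (2 * a12 * a21 + a22 * (a22 - s)) / (2 * a21 ^ 2) :=
    div_pos hn2 (by positivity)
  refine ⟨hr1, hr2, ?_, ?_, ?_⟩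
  · apply sCapY0_eq_one_of_key _ _ _ _ h22' hr1
    have hne : (2 * a21 ^ 2) ≠ 0 := by positivity
    field_simp
    linear_combination (a22 ^ 2) * hs2
  · apply sCapY0_eq_one_of_key _ _ _ _ h22' hr2
    have hne : (2 * a21 ^ 2) ≠ 0 := by positivity
    field_simp
    linear_combination (a22 ^ 2) * hs2
  · intro r hr
    have hD : 0 < a12 ^ 2 - 2 * a12 * a21 * r + r * (a22 ^ 2 + a21 ^ 2 * r) := by
      nlinarith [sq_nonneg (a21 * r - a12), mul_pos (show (0:ℝ) < a22 ^ 2 by positivity) hr]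
    rw [sCapY0, div_le_one (by positivity)]
    nlinarith [sq_nonneg ((a21 * r - a12) ^ 2 - a22 ^ 2 * r)]
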